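/- Let f = (f_1, …, f_n) : 𝔸^m → 𝔸^n be a morphism of affine spaces over an algebraically closed field, where each f_i is a homogeneous polynomial of positive degree. If f^{-1}(0) = {0}, then f is a finite morphism (i.e., the induced ring map k[y_1,…,y_n] → k[x_1,…,x_m] makes k[x_1,…,x_m] a finitely generated module). -/

import Mathlib

open MvPolynomial

-- homogeneous component of a product with a homogeneous polynomial
lemma hc_mul {σ : Type*} {R : Type*} [CommSemiring R]
    (c g : MvPolynomial σ R) {e N : ℕ} (hg : g.IsHomogeneous e) (hle : e ≤ N) :
    homogeneousComponent N (c * g) = homogeneousComponent (N - e) c * g := by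
  conv_lhs => rw [← sum_homogeneousComponent c, Finset.sum_mul, map_sum]
  have key : ∀ i, homogeneousComponent N (homogeneousComponent i c * g)
      = if N = i + e then homogeneousComponent i c * g else 0 := fun i =>
    homogeneousComponent_of_mem
      ((mem_homogeneousSubmodule _ _).2 ((homogeneousComponent_isHomogeneous i c).mul hg))
  simp_rw [key]
  have hcond : ∀ i, (N = i + e) = (i = N - e) := fun i => by
    apply propext; omega
  simp_rw [hcond]
  rw [Finset.sum_ite_eq' (Finset.range (c.totalDegree + 1)) (N - e)
    (fun i => homogeneousComponent i c * g)]
  split_ifs with h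
  · rfl
  · rw [Finset.mem_range, not_lt] at h
    rw [homogeneousComponent_eq_zero _ _ (by omega), zero_mul]


/-- Zelaci's Lemma 1.3: a morphism `𝔸^m → 𝔸^n` given by homogeneous polynomials
of positive degree whose only common zero is the origin is a finite morphism,
i.e. the induced map of coordinate rings is module-finite. -/
theorem stmt0 (k : Type*) [Field k] [IsAlgClosed k] (m n : ℕ)
    (f : Fin n → MvPolynomial (Fin m) k) (d : Fin n → ℕ)
    (hd : ∀ i, 1 ≤ d i)
    (hhom : ∀ i, (f i).IsHomogeneous (d i))
    (hzero : ∀ x : Fin m → k, (∀ i, MvPolynomial.eval x (f i) = 0) → x = 0) :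
    RingHom.Finite (MvPolynomial.aeval f :
      MvPolynomial (Fin n) k →ₐ[k] MvPolynomial (Fin m) k).toRingHom := by
  classical
  set I : Ideal (MvPolynomial (Fin m) k) := Ideal.span (Set.range f) with hI
  -- Step 1: each variable is in the radical of I
  have hrad : ∀ j : Fin m, (X j : MvPolynomial (Fin m) k) ∈ I.radical := by
    intro j
    rw [← vanishingIdeal_zeroLocus_eq_radical (K := k)]
    intro x hx
    have hx0 : x = 0 := hzero x (fun i => hx (f i) (Ideal.subset_span ⟨i, rfl⟩))
    simp [hx0]
  -- Step 2: a uniform exponent N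
  have hpow : ∀ j : Fin m, ∃ Nj : ℕ, (X j : MvPolynomial (Fin m) k) ^ Nj ∈ I :=
    fun j => hrad j
  choose e he using hpow
  set N : ℕ := (Finset.univ.sup e) + (Finset.univ.sup d) + 1 with hN
  have hdN : ∀ i, d i ≤ N := fun i => by
    have := Finset.le_sup (f := d) (Finset.mem_univ i); omega
  have hN1 : 1 ≤ N := by omega
  have hXN : ∀ j : Fin m, (X j : MvPolynomial (Fin m) k) ^ N ∈ I := by
    intro j
    have hej : e j ≤ N := by
      have := Finset.le_sup (f := e) (Finset.mem_univ j); omega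
    have : (X j : MvPolynomial (Fin m) k) ^ N
        = X j ^ e j * X j ^ (N - e j) := by rw [← pow_add]; congr 1; omega
    rw [this]
    exact Ideal.mul_mem_right _ _ (he j)
  -- Step 3: homogeneous coefficients
  have hcoeff : ∀ j : Fin m, ∃ h : Fin n → MvPolynomial (Fin m) k,
      (∀ i, (h i).IsHomogeneous (N - d i)) ∧
      (X j : MvPolynomial (Fin m) k) ^ N = ∑ i, h i * f i := by
    intro j
    obtain ⟨c, hc⟩ := (Ideal.mem_span_range_iff_exists_fun).1 (hXN j)
    refine ⟨fun i => homogeneousComponent (N - d i) (c i),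
      fun i => homogeneousComponent_isHomogeneous _ _, ?_⟩
    have hXh : ((X j : MvPolynomial (Fin m) k) ^ N).IsHomogeneous N := by
      simpa using (isHomogeneous_X k j).pow N
    calc (X j : MvPolynomial (Fin m) k) ^ N
        = homogeneousComponent N ((X j : MvPolynomial (Fin m) k) ^ N) := by
          rw [homogeneousComponent_of_mem ((mem_homogeneousSubmodule _ _).2 hXh), if_pos rfl]
      _ = homogeneousComponent N (∑ i, c i * f i) := by rw [hc]
      _ = ∑ i, homogeneousComponent (N - d i) (c i) * f i := by
          rw [map_sum]
          exact Finset.sum_congr rfl fun i _ => hc_mul (c i) (f i) (hhom i) (hdN i)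
  choose h hhomh hXeq using hcoeff
  -- Step 4: the module argument
  letI : Algebra (MvPolynomial (Fin n) k) (MvPolynomial (Fin m) k) :=
    ((MvPolynomial.aeval f : MvPolynomial (Fin n) k →ₐ[k] MvPolynomial (Fin m) k)).toRingHom.toAlgebra
  have hsmul : ∀ (r : MvPolynomial (Fin n) k) (x : MvPolynomial (Fin m) k),
      r • x = MvPolynomial.aeval f r * x := fun r x => by
    rw [Algebra.smul_def]; rfl
  set M : Submodule (MvPolynomial (Fin n) k) (MvPolynomial (Fin m) k) :=
    Submodule.span (MvPolynomial (Fin n) k)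
      ((fun σ' : Fin m →₀ ℕ => (monomial σ' (1:k) : MvPolynomial (Fin m) k)) ''
        {σ' | σ'.degree ≤ m * N}) with hM
  have hA : ∀ (c : k) (x : MvPolynomial (Fin m) k), x ∈ M → C c * x ∈ M := by
    intro c x hx
    have : C c * x = (C c : MvPolynomial (Fin n) k) • x := by
      rw [hsmul, aeval_C, MvPolynomial.algebraMap_eq]
    rw [this]
    exact Submodule.smul_mem _ _ hx
  have hB : ∀ p : MvPolynomial (Fin m) k,
      (∀ σ' ∈ p.support, (monomial σ' (1:k) : MvPolynomial (Fin m) k) ∈ M) → p ∈ M := by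
    intro p hp
    rw [MvPolynomial.as_sum p]
    apply Submodule.sum_mem
    intro v hv
    have : (monomial v (coeff v p) : MvPolynomial (Fin m) k) = C (coeff v p) * monomial v 1 := by
      rw [C_mul_monomial, mul_one]
    rw [this]
    exact hA _ _ (hp v hv)
  have hds : ∀ σ0 : Fin m →₀ ℕ, (σ0.sum fun _ e => e) = σ0.degree := fun _ => rfl
  have hdegadd : ∀ a b : Fin m →₀ ℕ, (a + b).degree = a.degree + b.degree := fun a b => by
    simp only [Finsupp.degree_eq_weight_one]; exact map_add _ a b
  have hC : ∀ eDeg : ℕ, ∀ σ' : Fin m →₀ ℕ, σ'.degree = eDeg →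
      (monomial σ' (1:k) : MvPolynomial (Fin m) k) ∈ M := by
    intro eDeg
    induction eDeg using Nat.strong_induction_on with
    | _ eDeg ih =>
      intro σ' hσ'
      by_cases hle : σ'.degree ≤ m * N
      · exact Submodule.subset_span ⟨σ', hle, rfl⟩
      · push_neg at hle
        have hj : ∃ j, N ≤ σ' j := by
          by_contra hcon
          push_neg at hcon
          have hcard : σ'.support.card ≤ m := by
            simpa using Finset.card_le_univ σ'.support
          have hb : σ'.degree ≤ m * (N - 1) := by
            calc σ'.degree = ∑ i ∈ σ'.support, σ' i := rfl
              _ ≤ ∑ _i ∈ σ'.support, (N - 1) :=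
                  Finset.sum_le_sum (fun i _ => by have := hcon i; omega)
              _ = σ'.support.card * (N - 1) := by rw [Finset.sum_const, smul_eq_mul]
              _ ≤ m * (N - 1) := Nat.mul_le_mul_right _ hcard
          have : m * (N - 1) ≤ m * N := Nat.mul_le_mul_left m (by omega)
          omega
        obtain ⟨j, hj⟩ := hj
        set τ : Fin m →₀ ℕ := σ' - Finsupp.single j N with hτ
        have hsle : Finsupp.single j N ≤ σ' := by
          rw [Finsupp.single_le_iff]; exact hj
        have hadd : Finsupp.single j N + τ = σ' := add_tsub_cancel_of_le hsle
        have hdegs : (Finsupp.single j N).degree = N := by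
          rw [Finsupp.degree_single]
        have hτdeg : τ.degree = eDeg - N := by
          have h2 := hdegadd (Finsupp.single j N) τ
          rw [hadd, hσ', hdegs] at h2
          omega
        have hNed : N ≤ eDeg := by
          have h3 := Finsupp.le_degree j σ'
          rw [hσ'] at h3
          omega
        have hmono : (monomial σ' (1:k) : MvPolynomial (Fin m) k)
            = (X j) ^ N * monomial τ 1 := by
          rw [X_pow_eq_monomial, monomial_mul, one_mul, hadd]
        rw [hmono, hXeq j, Finset.sum_mul]
        apply Submodule.sum_mem
        intro i _
        have hterm : h j i * f i * monomial τ (1:k)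
            = (X i : MvPolynomial (Fin n) k) • (h j i * monomial τ (1:k)) := by
          rw [hsmul, aeval_X]; ring
        rw [hterm]
        apply Submodule.smul_mem
        apply hB
        intro σ'' hσ''
        have hq : (h j i * monomial τ (1:k)).totalDegree ≤ (N - d i) + (eDeg - N) := by
          refine le_trans (totalDegree_mul _ _) ?_
          gcongr
          · exact (hhomh j i).totalDegree_le
          · rw [totalDegree_monomial _ one_ne_zero, hds, hτdeg]
        have hlt : σ''.degree < eDeg := by
          have h4 := MvPolynomial.le_totalDegree hσ''
          rw [hds] at h4
          have hd1 := hd i; have hd2 := hdN i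
          omega
        exact ih _ hlt σ'' rfl
  have htop : M = ⊤ := by
    rw [eq_top_iff]
    intro p _
    exact hB p (fun σ' _ => hC _ σ' rfl)
  exact ⟨Submodule.fg_def.2 ⟨_, (Finsupp.finite_of_degree_le (m * N)).image _, htop⟩⟩
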